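/- The number of threshold partitions of length n (degree partitions of threshold graphs on n vertices) equals 2^{n−1} for n ≥ 1. -/

import Mathlib

open scoped Classical in
/-- The degree of vertex `v` in the simple graph `G` on `[n]`. -/
noncomputable def degC {n : ℕ} (G : SimpleGraph (Fin n)) (v : Fin n) : ℕ :=
  (Finset.univ.filter (fun w => G.Adj v w)).card

/-- A graph is threshold if every (nonempty) induced subgraph has a
dominating or an isolated vertex. -/
def IsThreshold {n : ℕ} (G : SimpleGraph (Fin n)) : Prop :=
  ∀ S : Finset (Fin n), S.Nonempty →
    ∃ v ∈ S, (∀ w ∈ S, w ≠ v → G.Adj v w) ∨ (∀ w ∈ S, ¬ G.Adj v w)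

/-- `d` is a threshold partition of length `n`: the weakly decreasing
rearrangement of the degree sequence of a threshold graph on `n` vertices. -/
def IsThresholdPartition (n : ℕ) (d : Fin n → ℕ) : Prop :=
  Antitone d ∧ ∃ G : SimpleGraph (Fin n), IsThreshold G ∧
    ∃ σ : Equiv.Perm (Fin n), ∀ i, d i = degC G (σ i)

open Finset

/-- The threshold graph built from a sequence of choices. -/
def Gb {n : ℕ} (ε : Fin n → Bool) : SimpleGraph (Fin n) where
  Adj i j := i ≠ j ∧ ε (max i j) = true
  symm := by
    refine ⟨fun i j h => ?_⟩
    exact ⟨h.1.symm, by rw [max_comm]; exact h.2⟩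
  loopless := by refine ⟨fun i h => ?_⟩; exact h.1 rfl

open scoped Classical in
lemma degC_eq_sum {n : ℕ} (G : SimpleGraph (Fin n)) (v : Fin n) :
    degC G v = ∑ w : Fin n, if G.Adj v w then 1 else 0 := by
  classical
  rw [degC, Finset.card_filter]

lemma degC_congr {n : ℕ} {G G' : SimpleGraph (Fin n)} (h : G = G') (v : Fin n) :
    degC G v = degC G' v := by rw [h]

lemma isThreshold_Gb {n : ℕ} (ε : Fin n → Bool) : IsThreshold (Gb ε) := by
  intro S hS
  refine ⟨S.max' hS, S.max'_mem hS, ?_⟩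
  by_cases hb : ε (S.max' hS) = true
  · left
    intro w hw hne
    exact ⟨(Ne.symm hne), by rwa [max_eq_left (S.le_max' w hw)]⟩
  · right
    intro w hw hadj
    obtain ⟨-, h2⟩ := hadj
    rw [max_eq_left (S.le_max' w hw)] at h2
    exact hb h2

/-- The degree multiset of a graph. -/
noncomputable def degMult {n : ℕ} (G : SimpleGraph (Fin n)) : Multiset ℕ :=
  Finset.univ.val.map (degC G)

/-- Graph with vertex `v` deleted. -/
def Gdel {m : ℕ} (G : SimpleGraph (Fin (m+1))) (v : Fin (m+1)) : SimpleGraph (Fin m) where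
  Adj i j := G.Adj (v.succAbove i) (v.succAbove j)
  symm := ⟨fun i j h => G.adj_symm h⟩
  loopless := ⟨fun i h => G.irrefl h⟩

lemma isThreshold_Gdel {m : ℕ} {G : SimpleGraph (Fin (m+1))} (hG : IsThreshold G)
    (v : Fin (m+1)) : IsThreshold (Gdel G v) := by
  intro S' hS'
  obtain ⟨u, hu, hcase⟩ := hG (S'.image v.succAbove) (hS'.image _)
  obtain ⟨i, hi, rfl⟩ := Finset.mem_image.mp hu
  refine ⟨i, hi, ?_⟩
  rcases hcase with hdom | hiso
  · left
    intro j hj hne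
    exact hdom _ (Finset.mem_image_of_mem _ hj)
      (fun h => hne (Fin.succAbove_right_injective h))
  · right
    intro j hj hadj
    exact hiso _ (Finset.mem_image_of_mem _ hj) hadj

lemma degC_dom {m : ℕ} {G : SimpleGraph (Fin (m+1))} {v : Fin (m+1)}
    (hdom : ∀ w, w ≠ v → G.Adj v w) : degC G v = m := by
  classical
  rw [degC_eq_sum]
  have key : ∀ w : Fin (m+1), (if G.Adj v w then 1 else 0) = if w = v then 0 else 1 := by
    intro w
    by_cases h : w = v
    · subst h; simp
    · rw [if_pos (hdom w h), if_neg h]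
  calc ∑ w : Fin (m+1), (if G.Adj v w then 1 else 0)
      = ∑ w : Fin (m+1), (if w = v then 0 else 1) := Finset.sum_congr rfl (fun w _ => key w)
    _ = m := by
        rw [Finset.sum_ite, Finset.sum_const, Finset.sum_const]
        have : Finset.univ.filter (fun w : Fin (m+1) => ¬ w = v) = Finset.univ.erase v := by
          ext w; simp [Finset.mem_erase, and_comm]
        rw [this, Finset.card_erase_of_mem (Finset.mem_univ v)]
        simp

lemma degC_iso {n : ℕ} {G : SimpleGraph (Fin n)} {v : Fin n}
    (hiso : ∀ w, ¬ G.Adj v w) : degC G v = 0 := by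
  classical
  rw [degC_eq_sum]
  simp [hiso]

open scoped Classical in
lemma degC_succAbove {m : ℕ} (G : SimpleGraph (Fin (m+1))) (v : Fin (m+1)) (i : Fin m) :
    degC G (v.succAbove i)
      = degC (Gdel G v) i + (if G.Adj v (v.succAbove i) then 1 else 0) := by
  classical
  rw [degC_eq_sum, degC_eq_sum]
  rw [Fin.sum_univ_succAbove (fun w => if G.Adj (v.succAbove i) w then 1 else 0) v]
  rw [add_comm]
  exact congrArg₂ (· + ·)
    (Finset.sum_congr rfl (fun j _ => if_congr Iff.rfl rfl rfl))
    (if_congr (G.adj_comm _ _) rfl rfl)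

lemma univ_val_succAbove {m : ℕ} (v : Fin (m+1)) :
    (Finset.univ : Finset (Fin (m+1))).val
      = v ::ₘ (Finset.univ : Finset (Fin m)).val.map v.succAbove := by
  classical
  have h1 : (Finset.univ : Finset (Fin m)).map v.succAboveEmb = {v}ᶜ := by
    rw [Finset.map_eq_image]
    exact Fin.image_succAbove_univ v
  have h2 : (Finset.univ : Finset (Fin (m+1))) = insert v ({v}ᶜ : Finset (Fin (m+1))) := by
    ext w; by_cases h : w = v <;> simp [h]
  rw [h2]
  rw [Finset.insert_val_of_notMem (by simp)]
  congr 1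
  rw [← h1]
  rfl

lemma degMult_peel {m : ℕ} (G : SimpleGraph (Fin (m+1))) (v : Fin (m+1)) :
    degMult G = degC G v ::ₘ (Finset.univ.val.map (fun i => degC G (v.succAbove i))) := by
  rw [degMult, univ_val_succAbove v]
  rw [Multiset.map_cons, Multiset.map_map]
  rfl

lemma degMult_dom {m : ℕ} (G : SimpleGraph (Fin (m+1))) (v : Fin (m+1))
    (hdom : ∀ w, w ≠ v → G.Adj v w) :
    degMult G = (m : ℕ) ::ₘ (degMult (Gdel G v)).map (· + 1) := by
  rw [degMult_peel G v, degC_dom hdom]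
  congr 1
  rw [degMult, Multiset.map_map]
  apply Multiset.map_congr rfl
  intro i _
  rw [degC_succAbove G v i, if_pos (hdom _ (Fin.succAbove_ne v i))]
  rfl

lemma degMult_iso {m : ℕ} (G : SimpleGraph (Fin (m+1))) (v : Fin (m+1))
    (hiso : ∀ w, ¬ G.Adj v w) :
    degMult G = 0 ::ₘ degMult (Gdel G v) := by
  rw [degMult_peel G v, degC_iso hiso]
  congr 1
  rw [degMult]
  apply Multiset.map_congr rfl
  intro i _
  rw [degC_succAbove G v i, if_neg (hiso _), add_zero]

lemma Gdel_Gb {m : ℕ} (ε : Fin (m+1) → Bool) :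
    Gdel (Gb ε) (Fin.last m) = Gb (fun i => ε i.castSucc) := by
  ext i j
  show (Gb ε).Adj ((Fin.last m).succAbove i) ((Fin.last m).succAbove j) ↔ _
  rw [Fin.succAbove_last]
  show (i.castSucc ≠ j.castSucc ∧ ε (max i.castSucc j.castSucc) = true) ↔
    (i ≠ j ∧ ε (max i j).castSucc = true)
  have hmax : max i.castSucc j.castSucc = (max i j).castSucc := by
    rcases le_total i j with h | h
    · rw [max_eq_right h, max_eq_right (Fin.castSucc_le_castSucc_iff.mpr h)]
    · rw [max_eq_left h, max_eq_left (Fin.castSucc_le_castSucc_iff.mpr h)]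
  rw [hmax]
  simp [Fin.castSucc_inj]

lemma Gb_last_dom {m : ℕ} {ε : Fin (m+1) → Bool} (hb : ε (Fin.last m) = true) :
    ∀ w, w ≠ Fin.last m → (Gb ε).Adj (Fin.last m) w := by
  intro w hw
  exact ⟨Ne.symm hw, by rwa [max_eq_left (Fin.le_last w)]⟩

lemma Gb_last_iso {m : ℕ} {ε : Fin (m+1) → Bool} (hb : ε (Fin.last m) = false) :
    ∀ w, ¬ (Gb ε).Adj (Fin.last m) w := by
  intro w hadj
  obtain ⟨-, h2⟩ := hadj
  rw [max_eq_left (Fin.le_last w)] at h2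
  rw [h2] at hb
  exact Bool.noConfusion hb

lemma degC_zero_fin_one (G : SimpleGraph (Fin 1)) (v : Fin 1) : degC G v = 0 :=
  degC_iso (fun w h => G.irrefl ((Subsingleton.elim w v) ▸ h))

lemma degMult_fin_one (G : SimpleGraph (Fin 1)) : degMult G = {0} := by
  rw [degMult]
  have h : (Finset.univ : Finset (Fin 1)).val = {0} := rfl
  rw [h]
  simp [degC_zero_fin_one]

lemma exists_eps : ∀ (n : ℕ) (G : SimpleGraph (Fin n)), IsThreshold G →
    ∃ ε : Fin n → Bool, (∀ i : Fin n, i.val = 0 → ε i = false) ∧ degMult G = degMult (Gb ε) := by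
  intro n
  induction n with
  | zero =>
    intro G _
    exact ⟨fun _ => false, fun i _ => rfl, by simp [degMult]⟩
  | succ m ih =>
    intro G hG
    rcases Nat.eq_zero_or_pos m with hm | hm
    · subst hm
      exact ⟨fun _ => false, fun _ _ => rfl, by rw [degMult_fin_one, degMult_fin_one]⟩
    · obtain ⟨v, -, hcase⟩ := hG Finset.univ Finset.univ_nonempty
      obtain ⟨ε', hcond', heq'⟩ := ih (Gdel G v) (isThreshold_Gdel hG v)
      have hcond : ∀ (b : Bool) (i : Fin (m+1)), i.val = 0 →
          (Fin.snoc ε' b : Fin (m+1) → Bool) i = false := by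
        intro b i hi
        have hne : i ≠ Fin.last m := by
          intro h; rw [h] at hi; simp [Fin.last] at hi; omega
        obtain ⟨j, rfl⟩ := Fin.exists_castSucc_eq.mpr hne
        rw [Fin.snoc_castSucc]
        exact hcond' j hi
      have htail : ∀ b : Bool,
          Gdel (Gb (Fin.snoc ε' b)) (Fin.last m) = Gb ε' := by
        intro b
        rw [Gdel_Gb]
        congr 1
        funext j
        rw [Fin.snoc_castSucc]
      rcases hcase with hdom | hiso
      · refine ⟨Fin.snoc ε' true, hcond true, ?_⟩
        rw [degMult_dom G v (fun w hw => hdom w (Finset.mem_univ w) hw)]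
        rw [degMult_dom (Gb _) (Fin.last m) (Gb_last_dom (by rw [Fin.snoc_last]))]
        rw [htail true, heq']
      · refine ⟨Fin.snoc ε' false, hcond false, ?_⟩
        rw [degMult_iso G v (fun w => hiso w (Finset.mem_univ w))]
        rw [degMult_iso (Gb _) (Fin.last m) (Gb_last_iso (by rw [Fin.snoc_last]))]
        rw [htail false, heq']

lemma zero_mem_degMult_Gb {m : ℕ} (hm : 0 < m) (ε : Fin (m+1) → Bool) :
    0 ∈ degMult (Gb ε) ↔ ε (Fin.last m) = false := by
  cases hb : ε (Fin.last m) with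
  | false =>
    rw [degMult_iso (Gb ε) (Fin.last m) (Gb_last_iso hb)]
    simp
  | true =>
    rw [degMult_dom (Gb ε) (Fin.last m) (Gb_last_dom hb)]
    simp only [Multiset.mem_cons, Multiset.mem_map, Bool.true_eq_false, iff_false]
    rintro (h | ⟨a, -, ha⟩) <;> omega

lemma eps_inj : ∀ (n : ℕ) (ε₁ ε₂ : Fin n → Bool),
    (∀ i : Fin n, i.val = 0 → ε₁ i = false) → (∀ i : Fin n, i.val = 0 → ε₂ i = false) →
    degMult (Gb ε₁) = degMult (Gb ε₂) → ε₁ = ε₂ := by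
  intro n
  induction n with
  | zero => intro ε₁ ε₂ _ _ _; funext i; exact i.elim0
  | succ m ih =>
    intro ε₁ ε₂ h₁ h₂ heq
    rcases Nat.eq_zero_or_pos m with hm | hm
    · subst hm
      funext i
      have h0 : i.val = 0 := by omega
      rw [h₁ i h0, h₂ i h0]
    · have hlast : ε₁ (Fin.last m) = ε₂ (Fin.last m) := by
        have hiff := (zero_mem_degMult_Gb hm ε₁).symm.trans
          (heq ▸ zero_mem_degMult_Gb hm ε₂)
        cases hb1 : ε₁ (Fin.last m) <;> cases hb2 : ε₂ (Fin.last m) <;> simp_all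
      have htail : (fun i : Fin m => ε₁ i.castSucc) = (fun i : Fin m => ε₂ i.castSucc) := by
        apply ih
        · intro j hj
          exact h₁ j.castSucc (by simpa using hj)
        · intro j hj
          exact h₂ j.castSucc (by simpa using hj)
        · cases hb1 : ε₁ (Fin.last m) with
          | false =>
            have hb2 : ε₂ (Fin.last m) = false := hlast ▸ hb1
            rw [degMult_iso _ _ (Gb_last_iso hb1), degMult_iso _ _ (Gb_last_iso hb2),
              Gdel_Gb, Gdel_Gb] at heq
            exact (Multiset.cons_inj_right 0).mp heq
          | true =>
            have hb2 : ε₂ (Fin.last m) = true := hlast ▸ hb1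
            rw [degMult_dom _ _ (Gb_last_dom hb1), degMult_dom _ _ (Gb_last_dom hb2),
              Gdel_Gb, Gdel_Gb] at heq
            have := (Multiset.cons_inj_right (m : ℕ)).mp heq
            exact Multiset.map_injective (add_left_injective 1) this
      funext i
      induction i using Fin.lastCases with
      | last => exact hlast
      | cast j => exact congrFun htail j

noncomputable def sortedDeg {n : ℕ} (G : SimpleGraph (Fin n)) : Fin n → ℕ :=
  fun i => degC G (Tuple.sort (degC G) i.rev)

lemma antitone_sortedDeg {n : ℕ} (G : SimpleGraph (Fin n)) : Antitone (sortedDeg G) := by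
  intro i j hij
  exact Tuple.monotone_sort (degC G) (Fin.rev_le_rev.mpr hij)

lemma sortedDeg_perm {n : ℕ} (G : SimpleGraph (Fin n)) :
    ∃ σ : Equiv.Perm (Fin n), ∀ i, sortedDeg G i = degC G (σ i) :=
  ⟨(Fin.revPerm).trans (Tuple.sort (degC G)), fun _ => rfl⟩

lemma map_univ_perm {n : ℕ} (f : Fin n → ℕ) (σ : Equiv.Perm (Fin n)) :
    Finset.univ.val.map (fun i => f (σ i)) = Finset.univ.val.map f := by
  calc Finset.univ.val.map (fun i => f (σ i))
      = (Finset.univ.val.map σ).map f := (Multiset.map_map f σ Finset.univ.val).symm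
    _ = ((Finset.univ.map σ.toEmbedding).val).map f := rfl
    _ = Finset.univ.val.map f := by rw [Finset.map_univ_equiv]

lemma sortedDeg_degMult {n : ℕ} (G : SimpleGraph (Fin n)) :
    Finset.univ.val.map (sortedDeg G) = degMult G := by
  obtain ⟨σ, hσ⟩ := sortedDeg_perm G
  rw [show sortedDeg G = fun i => degC G (σ i) from funext hσ]
  exact map_univ_perm _ σ

lemma antitone_unique {n : ℕ} {f g : Fin n → ℕ} (hf : Antitone f) (hg : Antitone g)
    (h : Finset.univ.val.map f = Finset.univ.val.map g) : f = g := by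
  rw [Fin.univ_val_map, Fin.univ_val_map] at h
  have hperm : List.Perm (List.ofFn f) (List.ofFn g) := Multiset.coe_eq_coe.mp h
  haveI : Std.Antisymm (fun a b : ℕ => b ≤ a) := ⟨fun _ _ h1 h2 => le_antisymm h2 h1⟩
  have hsf : (List.ofFn f).Pairwise (fun a b => b ≤ a) :=
    List.pairwise_ofFn.mpr (fun _ _ hij => hf hij.le)
  have hsg : (List.ofFn g).Pairwise (fun a b => b ≤ a) :=
    List.pairwise_ofFn.mpr (fun _ _ hij => hg hij.le)
  exact List.ofFn_injective (List.Perm.eq_of_pairwise' hsf hsg hperm)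

theorem card_threshold_partitions (n : ℕ) (hn : 1 ≤ n) :
    {d : Fin n → ℕ | IsThresholdPartition n d}.ncard = 2 ^ (n - 1) := by
  obtain ⟨m, rfl⟩ : ∃ m, n = m + 1 := ⟨n - 1, by omega⟩
  set F : {ε : Fin (m+1) → Bool // ∀ i : Fin (m+1), i.val = 0 → ε i = false} → (Fin (m+1) → ℕ) :=
    fun ε => sortedDeg (Gb ε.1) with hF
  have hrange : {d : Fin (m+1) → ℕ | IsThresholdPartition (m+1) d} = Set.range F := by
    ext d
    constructor
    · rintro ⟨hanti, G, hG, σ, hσ⟩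
      obtain ⟨ε, hcond, heq⟩ := exists_eps (m+1) G hG
      refine ⟨⟨ε, hcond⟩, ?_⟩
      apply antitone_unique (antitone_sortedDeg _) hanti
      rw [sortedDeg_degMult, ← heq]
      rw [show d = fun i => degC G (σ i) from funext hσ]
      exact (map_univ_perm (degC G) σ).symm
    · rintro ⟨ε, rfl⟩
      exact ⟨antitone_sortedDeg _, Gb ε.1, isThreshold_Gb _, sortedDeg_perm _⟩
  have hFinj : Function.Injective F := by
    rintro ⟨ε₁, h₁⟩ ⟨ε₂, h₂⟩ h
    have h' : sortedDeg (Gb ε₁) = sortedDeg (Gb ε₂) := h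
    have hmeq : degMult (Gb ε₁) = degMult (Gb ε₂) := by
      rw [← sortedDeg_degMult, ← sortedDeg_degMult, h']
    exact Subtype.ext (eps_inj _ _ _ h₁ h₂ hmeq)
  rw [hrange, ← Nat.card_coe_set_eq, Nat.card_range_of_injective hFinj]
  have e : {ε : Fin (m+1) → Bool // ∀ i : Fin (m+1), i.val = 0 → ε i = false} ≃ (Fin m → Bool) :=
    { toFun := fun ε i => ε.1 i.succ
      invFun := fun g => ⟨Fin.cons false g, by
        intro i hi
        have h0 : i = 0 := Fin.ext (by simpa using hi)
        subst h0
        rw [Fin.cons_zero]⟩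
      left_inv := by
        rintro ⟨ε, hε⟩
        apply Subtype.ext
        funext i
        show (Fin.cons false (fun j => ε j.succ) : Fin (m+1) → Bool) i = ε i
        induction i using Fin.cases with
        | zero => rw [Fin.cons_zero, hε 0 rfl]
        | succ j => rw [Fin.cons_succ]
      right_inv := fun g => by
        funext i
        show (Fin.cons false g : Fin (m+1) → Bool) i.succ = g i
        rw [Fin.cons_succ] }
  rw [Nat.card_congr e, Nat.card_eq_fintype_card]
  simp
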